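/- Let X and Y be nontrivial real normed spaces. If the ℓ1-sum X ⊕_1 Y (the product X × Y equipped with the norm ‖(x, y)‖ = ‖x‖ + ‖y‖) is decomposably octahedral, then X is decomposably octahedral or Y is decomposably octahedral. -/

import Mathlib

/-- Decomposable octahedrality (DOH). -/
def DecomposablyOctahedral (X : Type*) [NormedAddCommGroup X] [NormedSpace ℝ X] : Prop :=
  ∀ E : Finset X, (∀ x ∈ E, ‖x‖ = 1) → ∀ ε : ℝ, 0 < ε → ∃ y : X, ‖y‖ = 1 ∧
    ∀ (n : ℕ) (ys : Fin n → X), ∑ i, ys i = y →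
      ∀ xs : Fin n → X, (∀ i, xs i ∈ E) →
      ∀ a b : Fin n → ℝ, (∀ i, 0 ≤ a i) → (∀ i, 0 ≤ b i) →
        (1 - ε) * ((∑ i, (a i + b i)) + 2) ≤
          ∑ i, (‖a i • xs i + ys i‖ + ‖b i • xs i - ys i‖)

section Aux
set_option linter.unusedSectionVars false

/-- The identity map from `X × Y` to the `ℓ¹`-sum. -/
def eL (X Y : Type*) : X × Y → WithLp 1 (X × Y) := (WithLp.equiv 1 (X × Y)).symm

variable {X Y : Type*} [NormedAddCommGroup X] [NormedSpace ℝ X]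
  [NormedAddCommGroup Y] [NormedSpace ℝ Y]

lemma normW (x : X) (y : Y) : ‖eL X Y (x, y)‖ = ‖x‖ + ‖y‖ := by
  rw [show eL X Y (x, y) = (WithLp.equiv 1 (X × Y)).symm (x, y) from rfl,
    WithLp.prod_norm_eq_of_nat 1 (by norm_cast)]
  simp

lemma addW (c : ℝ) (x w : X) :
    ‖c • (eL X Y (x, 0)) + eL X Y (w, 0)‖ = ‖c • x + w‖ := by
  have : c • (eL X Y (x, 0)) + eL X Y (w, 0) = eL X Y (c • x + w, c • (0 : Y) + 0) := rfl
  rw [this, normW]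
  simp

lemma subW (c : ℝ) (x w : X) :
    ‖c • (eL X Y (x, 0)) - eL X Y (w, 0)‖ = ‖c • x - w‖ := by
  have : c • (eL X Y (x, 0)) - eL X Y (w, 0) = eL X Y (c • x - w, c • (0 : Y) - 0) := rfl
  rw [this, normW]
  simp

lemma addW' (c : ℝ) (y w : Y) :
    ‖c • (eL X Y (0, y)) + eL X Y (0, w)‖ = ‖c • y + w‖ := by
  have : c • (eL X Y (0, y)) + eL X Y (0, w) = eL X Y (c • (0 : X) + 0, c • y + w) := rfl
  rw [this, normW]
  simp

lemma subW' (c : ℝ) (y w : Y) :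
    ‖c • (eL X Y (0, y)) - eL X Y (0, w)‖ = ‖c • y - w‖ := by
  have : c • (eL X Y (0, y)) - eL X Y (0, w) = eL X Y (c • (0 : X) - 0, c • y - w) := rfl
  rw [this, normW]
  simp

lemma sumW {n : ℕ} (f : Fin n → X) (g : Fin n → Y) :
    ∑ i, eL X Y (f i, g i) = eL X Y (∑ i, f i, ∑ i, g i) := by
  induction n with
  | zero => simp [eL]; rfl
  | succ n ih =>
      rw [Fin.sum_univ_castSucc, ih, Fin.sum_univ_castSucc (f := f),
        Fin.sum_univ_castSucc (f := g)]
      rfl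

end Aux

/-- If the ℓ₁-sum `X ⊕₁ Y` (with norm `‖(x, y)‖ = ‖x‖ + ‖y‖`) of nontrivial spaces is DOH,
then `X` is DOH or `Y` is DOH. -/
theorem doh_or_doh_of_doh_l1_sum (X Y : Type*) [NormedAddCommGroup X] [NormedSpace ℝ X]
    [NormedAddCommGroup Y] [NormedSpace ℝ Y] [Nontrivial X] [Nontrivial Y]
    (h : DecomposablyOctahedral (WithLp 1 (X × Y))) :
    DecomposablyOctahedral X ∨ DecomposablyOctahedral Y := by
  classical
  by_contra hc
  push_neg at hc
  obtain ⟨hX, hY⟩ := hc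
  unfold DecomposablyOctahedral at hX hY h
  push_neg at hX hY
  obtain ⟨E₁, hE₁, ε₁, hε₁, H₁⟩ := hX
  obtain ⟨E₂, hE₂, ε₂, hε₂, H₂⟩ := hY
  set E : Finset (WithLp 1 (X × Y)) :=
    E₁.image (fun x => eL X Y (x, 0)) ∪ E₂.image (fun y => eL X Y (0, y)) with hEdef
  have hE : ∀ z ∈ E, ‖z‖ = 1 := by
    intro z hzE
    simp only [hEdef, Finset.mem_union, Finset.mem_image] at hzE
    rcases hzE with ⟨x, hx, rfl⟩ | ⟨y, hy, rfl⟩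
    · rw [normW]; simp [hE₁ x hx]
    · rw [normW]; simp [hE₂ y hy]
  obtain ⟨z, hz, Hz⟩ := h E hE (min ε₁ ε₂) (lt_min hε₁ hε₂)
  set u := ((WithLp.equiv 1 (X × Y)) z).1 with hudef
  set v := ((WithLp.equiv 1 (X × Y)) z).2 with hvdef
  have hzuv : z = eL X Y (u, v) := ((WithLp.equiv 1 (X × Y)).symm_apply_apply z).symm
  set t := ‖u‖ with htdef
  set s := ‖v‖ with hsdef
  have ht0 : 0 ≤ t := norm_nonneg _
  have hs0 : 0 ≤ s := norm_nonneg _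
  have hts : t + s = 1 := by rw [htdef, hsdef, ← normW u v, ← hzuv]; exact hz
  have hu' : ∃ u' : X, ‖u'‖ = 1 ∧ t • u' = u := by
    rcases eq_or_lt_of_le ht0 with h0 | hpos
    · obtain ⟨x, hx⟩ := exists_norm_eq X (zero_le_one (α := ℝ))
      exact ⟨x, hx, by rw [show u = 0 from norm_eq_zero.mp h0.symm, ← h0, zero_smul]⟩
    · refine ⟨t⁻¹ • u, ?_, ?_⟩
      · rw [norm_smul, Real.norm_eq_abs, abs_of_pos (inv_pos.mpr hpos), ← htdef,
          inv_mul_cancel₀ hpos.ne']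
      · rw [smul_smul, mul_inv_cancel₀ hpos.ne', one_smul]
  have hv' : ∃ v' : Y, ‖v'‖ = 1 ∧ s • v' = v := by
    rcases eq_or_lt_of_le hs0 with h0 | hpos
    · obtain ⟨y, hy⟩ := exists_norm_eq Y (zero_le_one (α := ℝ))
      exact ⟨y, hy, by rw [show v = 0 from norm_eq_zero.mp h0.symm, ← h0, zero_smul]⟩
    · refine ⟨s⁻¹ • v, ?_, ?_⟩
      · rw [norm_smul, Real.norm_eq_abs, abs_of_pos (inv_pos.mpr hpos), ← hsdef,
          inv_mul_cancel₀ hpos.ne']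
      · rw [smul_smul, mul_inv_cancel₀ hpos.ne', one_smul]
  obtain ⟨u', hu'1, hu't⟩ := hu'
  obtain ⟨v', hv'1, hv's⟩ := hv'
  obtain ⟨n, ys1, hsum1, xs1, hxs1, a1, b1, ha1, hb1, hlt1⟩ := H₁ u' hu'1
  obtain ⟨m, ys2, hsum2, xs2, hxs2, a2, b2, ha2, hb2, hlt2⟩ := H₂ v' hv'1
  set SX := ∑ i, (‖a1 i • xs1 i + ys1 i‖ + ‖b1 i • xs1 i - ys1 i‖) with hSXdef
  set SY := ∑ i, (‖a2 i • xs2 i + ys2 i‖ + ‖b2 i • xs2 i - ys2 i‖) with hSYdef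
  set A := ∑ i, (a1 i + b1 i) with hAdef
  set C := ∑ i, (a2 i + b2 i) with hCdef
  set ys : Fin (n + m) → WithLp 1 (X × Y) :=
    Fin.append (fun i => eL X Y (t • ys1 i, 0)) (fun j => eL X Y (0, s • ys2 j)) with hysdef
  set xs : Fin (n + m) → WithLp 1 (X × Y) :=
    Fin.append (fun i => eL X Y (xs1 i, 0)) (fun j => eL X Y (0, xs2 j)) with hxsdef
  set a : Fin (n + m) → ℝ := Fin.append (fun i => t * a1 i) (fun j => s * a2 j) with hadef
  set b : Fin (n + m) → ℝ := Fin.append (fun i => t * b1 i) (fun j => s * b2 j) with hbdef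
  have hsum : ∑ i, ys i = z := by
    simp only [hysdef]
    rw [Fin.sum_univ_add]
    simp only [Fin.append_left, Fin.append_right]
    rw [sumW, sumW]
    rw [show eL X Y (∑ i, t • ys1 i, ∑ _i : Fin n, (0 : Y)) +
        eL X Y (∑ _j : Fin m, (0 : X), ∑ j, s • ys2 j)
        = eL X Y (∑ i, t • ys1 i + ∑ _j : Fin m, (0 : X),
            ∑ _i : Fin n, (0 : Y) + ∑ j, s • ys2 j) from rfl]
    simp only [Finset.sum_const_zero, add_zero, zero_add]
    rw [← Finset.smul_sum, ← Finset.smul_sum, hsum1, hsum2, hu't, hv's]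
    exact hzuv.symm
  have hxsE : ∀ i, xs i ∈ E := by
    intro i
    refine Fin.addCases (fun i => ?_) (fun j => ?_) i
    · simp only [hxsdef, Fin.append_left]
      exact Finset.mem_union_left _ (Finset.mem_image_of_mem _ (hxs1 i))
    · simp only [hxsdef, Fin.append_right]
      exact Finset.mem_union_right _ (Finset.mem_image_of_mem _ (hxs2 j))
  have ha0 : ∀ i, 0 ≤ a i := by
    intro i
    refine Fin.addCases (fun i => ?_) (fun j => ?_) i
    · simp only [hadef, Fin.append_left]; exact mul_nonneg ht0 (ha1 i)
    · simp only [hadef, Fin.append_right]; exact mul_nonneg hs0 (ha2 j)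
  have hb0 : ∀ i, 0 ≤ b i := by
    intro i
    refine Fin.addCases (fun i => ?_) (fun j => ?_) i
    · simp only [hbdef, Fin.append_left]; exact mul_nonneg ht0 (hb1 i)
    · simp only [hbdef, Fin.append_right]; exact mul_nonneg hs0 (hb2 j)
  have hab : ∑ i, (a i + b i) = t * A + s * C := by
    simp only [hadef, hbdef]
    rw [Fin.sum_univ_add]
    simp only [Fin.append_left, Fin.append_right]
    rw [hAdef, hCdef, Finset.mul_sum, Finset.mul_sum]
    simp [mul_add]
  have hnorm : ∑ i, (‖a i • xs i + ys i‖ + ‖b i • xs i - ys i‖) = t * SX + s * SY := by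
    simp only [hadef, hbdef, hxsdef, hysdef]
    rw [Fin.sum_univ_add]
    simp only [Fin.append_left, Fin.append_right]
    have e1 : ∑ i : Fin n, (‖(t * a1 i) • eL X Y (xs1 i, (0 : Y)) + eL X Y (t • ys1 i, 0)‖ +
        ‖(t * b1 i) • eL X Y (xs1 i, (0 : Y)) - eL X Y (t • ys1 i, 0)‖) = t * SX := by
      rw [hSXdef, Finset.mul_sum]
      refine Finset.sum_congr rfl fun i _ => ?_
      rw [addW, subW, mul_smul, mul_smul, ← smul_add, ← smul_sub, norm_smul, norm_smul,
        Real.norm_of_nonneg ht0, mul_add]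
    have e2 : ∑ j : Fin m, (‖(s * a2 j) • eL X Y ((0 : X), xs2 j) + eL X Y (0, s • ys2 j)‖ +
        ‖(s * b2 j) • eL X Y ((0 : X), xs2 j) - eL X Y (0, s • ys2 j)‖) = s * SY := by
      rw [hSYdef, Finset.mul_sum]
      refine Finset.sum_congr rfl fun j _ => ?_
      rw [addW', subW', mul_smul, mul_smul, ← smul_add, ← smul_sub, norm_smul, norm_smul,
        Real.norm_of_nonneg hs0, mul_add]
    rw [e1, e2]
  have HzI := Hz (n + m) ys hsum xs hxsE a b ha0 hb0
  rw [hab, hnorm] at HzI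
  set ε := min ε₁ ε₂ with hεdef
  have hεa : ε ≤ ε₁ := min_le_left _ _
  have hεb : ε ≤ ε₂ := min_le_right _ _
  have hA0 : 0 ≤ A := by
    rw [hAdef]; exact Finset.sum_nonneg fun i _ => add_nonneg (ha1 i) (hb1 i)
  have hC0 : 0 ≤ C := by
    rw [hCdef]; exact Finset.sum_nonneg fun j _ => add_nonneg (ha2 j) (hb2 j)
  have k1 : (1 - ε₁) * (A + 2) ≤ (1 - ε) * (A + 2) :=
    mul_le_mul_of_nonneg_right (by linarith) (by linarith)
  have k2 : (1 - ε₂) * (C + 2) ≤ (1 - ε) * (C + 2) :=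
    mul_le_mul_of_nonneg_right (by linarith) (by linarith)
  have hcase : 0 < t ∨ 0 < s := by
    by_contra hcon
    push_neg at hcon
    have := hcon.1
    have := hcon.2
    linarith
  have heq : t * ((1 - ε) * (A + 2)) + s * ((1 - ε) * (C + 2))
      = (1 - ε) * (t * A + s * C + 2) := by
    linear_combination (2 * (1 - ε)) * hts
  have main : t * SX + s * SY < (1 - ε) * (t * A + s * C + 2) := by
    rcases hcase with hpos | hpos
    · have h1 : t * SX < t * ((1 - ε₁) * (A + 2)) := mul_lt_mul_of_pos_left hlt1 hpos
      have h1' : t * ((1 - ε₁) * (A + 2)) ≤ t * ((1 - ε) * (A + 2)) :=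
        mul_le_mul_of_nonneg_left k1 ht0
      have h2 : s * SY ≤ s * ((1 - ε) * (C + 2)) :=
        mul_le_mul_of_nonneg_left (hlt2.le.trans k2) hs0
      linarith
    · have h1 : s * SY < s * ((1 - ε₂) * (C + 2)) := mul_lt_mul_of_pos_left hlt2 hpos
      have h1' : s * ((1 - ε₂) * (C + 2)) ≤ s * ((1 - ε) * (C + 2)) :=
        mul_le_mul_of_nonneg_left k2 hs0
      have h2 : t * SX ≤ t * ((1 - ε) * (A + 2)) :=
        mul_le_mul_of_nonneg_left (hlt1.le.trans k1) ht0
      linarith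
  linarith
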